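/- arXiv:1003.5480 — 4 statements merged into one kernel-verified Lean document; each statement's English description precedes it below -/
import Mathlib

section
/- Let k ≥ 2. There is no deterministic mechanism f, mapping each k-tuple (ν_1,…,ν_k) of non-atomic Borel probability measures on [0,1) to a measurable partition (f_1(ν),…,f_k(ν)) of [0,1), with the following three properties: (a) if all declared measures are equal to a common measure ν, then ν(f_i(ν)) = 1/k for every i; (b) if the declared measures are not all equal, then ν_i(f_i(ν)) > 1/k for every i; (c) truthfulness: for every tuple of true measures (μ_1,…,μ_k), every player i, and every alternative declaration ν_i', one has μ_i(f_i(μ_1,…,ν_i',…,μ_k)) ≤ μ_i(f_i(μ_1,…,μ_i,…,μ_k)). -/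
open MeasureTheory
open scoped ENNReal

/-- The cake `[0,1)`. -/
abbrev Cake : Type := ↥(Set.Ico (0 : ℝ) 1)

/-- A non-atomic Borel probability measure on `[0,1)`. -/
def IsNonatomicProb (ν : Measure Cake) : Prop :=
  IsProbabilityMeasure ν ∧ ∀ x : Cake, ν {x} = 0

/-- There is no deterministic truthful mechanism that is fair on equal declarations and
super-fair on unequal ones: no map `f` from `k`-tuples of non-atomic Borel probability
measures on `[0,1)` to measurable partitions of `[0,1)` can satisfy (a) if all declared
measures equal `ν` then every piece has `ν`-value `1/k`; (b) if the declared measures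
are not all equal then every player `i` gets `ν i`-value `> 1/k`; and (c) truthfulness:
no player can strictly gain (in her true measure) by deviating from a truthful
declaration. -/
theorem no_deterministic_truthful_superfair_mechanism (k : ℕ) (hk : 2 ≤ k) :
    ¬ ∃ f : (Fin k → Measure Cake) → (Fin k → Set Cake),
      (∀ ν : Fin k → Measure Cake, (∀ i, IsNonatomicProb (ν i)) →
        ((∀ i, MeasurableSet (f ν i)) ∧
          (∀ i j, i ≠ j → Disjoint (f ν i) (f ν j)) ∧
          (⋃ i, f ν i) = Set.univ)) ∧
      (∀ ν : Measure Cake, IsNonatomicProb ν →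
        ∀ i, ν (f (fun _ => ν) i) = (k : ℝ≥0∞)⁻¹) ∧
      (∀ ν : Fin k → Measure Cake, (∀ i, IsNonatomicProb (ν i)) →
        (∃ i j, ν i ≠ ν j) →
        ∀ i, (k : ℝ≥0∞)⁻¹ < ν i (f ν i)) ∧
      (∀ μ : Fin k → Measure Cake, (∀ i, IsNonatomicProb (μ i)) →
        ∀ (i : Fin k) (ν' : Measure Cake), IsNonatomicProb ν' →
          μ i (f (Function.update μ i ν') i) ≤ μ i (f μ i)) := by
  rintro ⟨f, h1, h2, h3, h4⟩
  have hk0 : (k : ℝ≥0∞) ≠ 0 := by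
    simp only [ne_eq, Nat.cast_eq_zero]; omega
  have hktop : (k : ℝ≥0∞) ≠ ⊤ := ENNReal.natCast_ne_top k
  have hk1 : (k : ℝ≥0∞) ≠ 1 := by
    simp only [ne_eq, Nat.cast_eq_one]; omega
  -- the base (Lebesgue-like) measure on the cake
  set ν : Measure Cake := (volume : Measure ℝ).comap Subtype.val with hνdef
  have hemb : MeasurableEmbedding (Subtype.val : Cake → ℝ) :=
    MeasurableEmbedding.subtype_coe measurableSet_Ico
  have hνapp : ∀ s : Set Cake, ν s = volume (Subtype.val '' s) := fun s => by
    rw [hνdef, hemb.comap_apply]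
  have hνuniv : ν Set.univ = 1 := by
    rw [hνapp, Set.image_univ, Subtype.range_coe, Real.volume_Ico]
    norm_num
  have hνna : IsNonatomicProb ν := by
    refine ⟨⟨hνuniv⟩, fun x => ?_⟩
    rw [hνapp, Set.image_singleton, Real.volume_singleton]
  -- indices
  set i0 : Fin k := ⟨0, by omega⟩ with hi0def
  set i1 : Fin k := ⟨1, by omega⟩ with hi1def
  have hi01 : i0 ≠ i1 := by simp [hi0def, hi1def, Fin.ext_iff]
  -- the truthful partition for the all-ν profile, and player i0's piece
  set A : Set Cake := f (fun _ => ν) i0 with hAdef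
  have hA : ν A = (k : ℝ≥0∞)⁻¹ := h2 ν hνna i0
  -- the manipulating measure
  set μ : Measure Cake := (k : ℝ≥0∞) • ν.restrict A with hμdef
  have hμA : μ A = 1 := by
    rw [hμdef, Measure.smul_apply, smul_eq_mul, Measure.restrict_apply_self, hA,
      ENNReal.mul_inv_cancel hk0 hktop]
  have hμuniv : μ Set.univ = 1 := by
    rw [hμdef, Measure.smul_apply, smul_eq_mul, Measure.restrict_apply_univ, hA,
      ENNReal.mul_inv_cancel hk0 hktop]
  have hμna : IsNonatomicProb μ := by
    refine ⟨⟨hμuniv⟩, fun x => ?_⟩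
    have h1' : ν.restrict A {x} ≤ ν {x} := by
      rw [Measure.restrict_apply (measurableSet_singleton x)]
      exact measure_mono Set.inter_subset_left
    rw [hνna.2 x] at h1'
    rw [hμdef, Measure.smul_apply, smul_eq_mul, le_zero_iff.mp h1', mul_zero]
  have hμν : μ ≠ ν := by
    intro h
    rw [h, hA] at hμA
    exact hk1 (ENNReal.inv_eq_one.mp hμA)
  -- the manipulated profile
  set P : Fin k → Measure Cake := Function.update (fun _ => ν) i0 μ with hPdef
  have hPi0 : P i0 = μ := by rw [hPdef, Function.update_self]
  have hPne : ∀ i, i ≠ i0 → P i = ν := fun i hi => by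
    rw [hPdef, Function.update_of_ne hi]
  have hP : ∀ i, IsNonatomicProb (P i) := by
    intro i
    by_cases h : i = i0
    · rw [h, hPi0]; exact hμna
    · rw [hPne i h]; exact hνna
  have hPexists : ∃ i j, P i ≠ P j := ⟨i0, i1, by rw [hPi0, hPne i1 (Ne.symm hi01)]; exact hμν⟩
  -- superfairness at P
  have hsf : ∀ i, (k : ℝ≥0∞)⁻¹ < P i (f P i) := h3 P hP hPexists
  -- truthfulness for player i0 with true profile P, deviating to ν
  have hupd : Function.update P i0 ν = (fun _ => ν) := by
    funext j
    by_cases h : j = i0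
    · rw [h, Function.update_self]
    · rw [Function.update_of_ne h, hPne j h]
  have htr := h4 P hP i0 ν hνna
  rw [hupd, hPi0, ← hAdef, hμA] at htr
  -- hence ν (f P i0) ≥ k⁻¹
  have hmeasP := (h1 P hP).1
  have hνfP0 : (k : ℝ≥0∞)⁻¹ ≤ ν (f P i0) := by
    have h2' : μ (f P i0) = (k : ℝ≥0∞) * ν (f P i0 ∩ A) := by
      rw [hμdef, Measure.smul_apply, smul_eq_mul, Measure.restrict_apply (hmeasP i0)]
    have h3' : ν (f P i0 ∩ A) ≤ ν (f P i0) := measure_mono Set.inter_subset_left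
    calc (k : ℝ≥0∞)⁻¹ = (k : ℝ≥0∞)⁻¹ * 1 := (mul_one _).symm
      _ ≤ (k : ℝ≥0∞)⁻¹ * μ (f P i0) := by exact mul_le_mul_right htr _
      _ = (k : ℝ≥0∞)⁻¹ * ((k : ℝ≥0∞) * ν (f P i0 ∩ A)) := by rw [h2']
      _ = ν (f P i0 ∩ A) := by
          rw [← mul_assoc, ENNReal.inv_mul_cancel hk0 hktop, one_mul]
      _ ≤ ν (f P i0) := h3'
  -- total measure of the pieces under ν is 1
  have hsum : ∑ i, ν (f P i) = 1 := by
    have hdisj : Pairwise (Function.onFun Disjoint (f P)) := fun i j hij => (h1 P hP).2.1 i j hij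
    have := measure_iUnion (μ := ν) hdisj hmeasP
    rw [(h1 P hP).2.2, hνuniv, tsum_fintype] at this
    exact this.symm
  -- lower bound on all pieces but i1
  have hlow : ∀ i, (k : ℝ≥0∞)⁻¹ ≤ ν (f P i) ∨ i = i1 := by
    intro i
    by_cases h : i = i1
    · exact Or.inr h
    · left
      by_cases h0 : i = i0
      · rw [h0]; exact hνfP0
      · have := hsf i
        rw [hPne i h0] at this
        exact this.le
  have hcard : (Finset.univ.erase i1).card = k - 1 := by
    rw [Finset.card_erase_of_mem (Finset.mem_univ _), Finset.card_univ, Fintype.card_fin]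
  have hS : ((k - 1 : ℕ) : ℝ≥0∞) * (k : ℝ≥0∞)⁻¹ ≤ ∑ i ∈ Finset.univ.erase i1, ν (f P i) := by
    have := Finset.card_nsmul_le_sum (Finset.univ.erase i1) (fun i => ν (f P i)) ((k : ℝ≥0∞)⁻¹)
      (fun i hi => by
        rcases hlow i with h | h
        · exact h
        · exact absurd h (Finset.ne_of_mem_erase hi))
    rwa [hcard, nsmul_eq_mul] at this
  have hsplit : ν (f P i1) + ∑ i ∈ Finset.univ.erase i1, ν (f P i) = 1 := by
    rw [← hsum]
    exact Finset.add_sum_erase _ (fun i => ν (f P i)) (Finset.mem_univ i1)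
  have hone : (k : ℝ≥0∞)⁻¹ + ((k - 1 : ℕ) : ℝ≥0∞) * (k : ℝ≥0∞)⁻¹ = 1 := by
    have hcast : (1 : ℝ≥0∞) + ((k - 1 : ℕ) : ℝ≥0∞) = (k : ℝ≥0∞) := by
      rw [← Nat.cast_one, ← Nat.cast_add]
      congr 1
      omega
    calc (k : ℝ≥0∞)⁻¹ + ((k - 1 : ℕ) : ℝ≥0∞) * (k : ℝ≥0∞)⁻¹
        = (1 + ((k - 1 : ℕ) : ℝ≥0∞)) * (k : ℝ≥0∞)⁻¹ := by ring
      _ = (k : ℝ≥0∞) * (k : ℝ≥0∞)⁻¹ := by rw [hcast]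
      _ = 1 := ENNReal.mul_inv_cancel hk0 hktop
  have hfin : ((k - 1 : ℕ) : ℝ≥0∞) * (k : ℝ≥0∞)⁻¹ ≠ ⊤ :=
    ENNReal.mul_ne_top (ENNReal.natCast_ne_top _) (ENNReal.inv_ne_top.mpr hk0)
  have hle : ν (f P i1) + ((k - 1 : ℕ) : ℝ≥0∞) * (k : ℝ≥0∞)⁻¹ ≤
      (k : ℝ≥0∞)⁻¹ + ((k - 1 : ℕ) : ℝ≥0∞) * (k : ℝ≥0∞)⁻¹ := by
    rw [hone, ← hsplit]
    exact add_le_add_right hS _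
  have hfinal : ν (f P i1) ≤ (k : ℝ≥0∞)⁻¹ :=
    (ENNReal.add_le_add_iff_right hfin).mp hle
  have := hsf i1
  rw [hPne i1 (Ne.symm hi01)] at this
  exact absurd hfinal (not_le.mpr this)
end

section
/- Let μ_1, …, μ_k be non-atomic Borel probability measures on [0,1). Suppose there exists a Borel-measurable partition B_1, …, B_k of [0,1) with μ_i(B_i) > 1/k for every i (a 'super-fair' partition). Then there exists a partition Q_1, …, Q_k in 𝒬 (each Q_i a finite union of half-open intervals with rational endpoints) with μ_i(Q_i) > 1/k for every i. -/
open MeasureTheory Set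
open scoped ENNReal symmDiff

/-- `R` is a finite union of half-open intervals `[a, b) ⊆ [0,1)` with rational
endpoints (an element of the algebra `ℛ`). -/
def IsRatIcoUnion (R : Set ℝ) : Prop :=
  ∃ s : Finset (ℚ × ℚ), (∀ p ∈ s, 0 ≤ p.1 ∧ p.2 ≤ 1) ∧
    R = ⋃ p ∈ s, Set.Ico (p.1 : ℝ) (p.2 : ℝ)

lemma ratApprox (ν : Measure ℝ) [IsFiniteMeasure ν]
    (hsupp : ν (Set.Ico (0 : ℝ) 1)ᶜ = 0) (hatom : ∀ x : ℝ, ν {x} = 0)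
    (s : Set ℝ) (hs : MeasurableSet s) {ε : ℝ≥0∞} (hε : ε ≠ 0) :
    ∃ R, IsRatIcoUnion R ∧ ν (R ∆ s) < ε := by
  classical
  have hε2 : ε / 2 ≠ 0 := (ENNReal.half_pos hε).ne'
  obtain ⟨U, hUo, hUfin, hUs⟩ := hs.exists_isOpen_symmDiff_lt (measure_ne_top ν s) hε2
  set d : ℕ → ℚ × ℚ := fun n => (Denumerable.eqv (ℚ × ℚ)).symm n with hd
  set f : ℕ → Set ℝ := fun n =>
    if Set.Ioo ((d n).1 : ℝ) ((d n).2 : ℝ) ⊆ U then Set.Ioo ((d n).1 : ℝ) ((d n).2 : ℝ)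
    else ∅ with hf
  have hfU : ∀ n, f n ⊆ U := by
    intro n
    by_cases h : Set.Ioo ((d n).1 : ℝ) ((d n).2 : ℝ) ⊆ U <;> simp [hf, h]
  have hfmeas : ∀ n, MeasurableSet (f n) := by
    intro n
    by_cases h : Set.Ioo ((d n).1 : ℝ) ((d n).2 : ℝ) ⊆ U <;> simp [hf, h, measurableSet_Ioo]
  have hUf : U = ⋃ n, f n := by
    apply Set.Subset.antisymm
    · intro x hx
      obtain ⟨v, hv, hxv, hvU⟩ :=
        Real.isTopologicalBasis_Ioo_rat.exists_subset_of_mem_open hx hUo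
      simp only [Set.mem_iUnion] at hv
      obtain ⟨a, b, -, rfl⟩ := hv
      refine Set.mem_iUnion.2 ⟨Denumerable.eqv (ℚ × ℚ) (a, b), ?_⟩
      have hdab : d (Denumerable.eqv (ℚ × ℚ) (a, b)) = (a, b) := by simp [hd]
      rw [hf]; simp only [hdab]
      rw [if_pos hvU]; exact hxv
    · exact Set.iUnion_subset hfU
  have htend := tendsto_measure_iUnion_accumulate (μ := ν) (f := f)
  rw [← hUf] at htend
  have hlt : ν U < ν U + ε / 2 := ENNReal.lt_add_right hUfin.ne hε2
  have hev : ∀ᶠ n in Filter.atTop, ν U < ν (Set.accumulate f n) + ε / 2 := by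
    have : Filter.Tendsto (fun n => ν (Set.accumulate f n) + ε / 2) Filter.atTop
        (nhds (ν U + ε / 2)) := htend.add tendsto_const_nhds
    exact this.eventually_const_lt hlt
  obtain ⟨n, hn⟩ := hev.exists
  set A := Set.accumulate f n with hA
  have hAmeas : MeasurableSet A := by
    apply MeasurableSet.iUnion; intro m; exact MeasurableSet.iUnion fun _ => hfmeas m
  have hAU : A ⊆ U := by
    intro x hx
    obtain ⟨m, -, hm⟩ := Set.mem_accumulate.mp hx
    exact hfU m hm
  have hUA : ν (U \ A) < ε / 2 :=
    measure_diff_lt_of_lt_add hAmeas.nullMeasurableSet hAU (measure_ne_top ν A) hn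
  -- rational endpoints
  set g : ℕ → ℚ × ℚ := fun m =>
    if Set.Ioo ((d m).1 : ℝ) ((d m).2 : ℝ) ⊆ U then (max 0 (d m).1, min 1 (d m).2)
    else (0, 0) with hg
  set t : Finset (ℚ × ℚ) := (Finset.range (n + 1)).image g with ht
  set R : Set ℝ := ⋃ p ∈ t, Set.Ico ((p.1 : ℝ)) ((p.2 : ℝ)) with hR
  have hRrat : IsRatIcoUnion R := by
    refine ⟨t, ?_, rfl⟩
    intro p hp
    simp only [ht, Finset.mem_image] at hp
    obtain ⟨m, -, rfl⟩ := hp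
    rw [hg]
    by_cases h : Set.Ioo ((d m).1 : ℝ) ((d m).2 : ℝ) ⊆ U <;>
      simp [h, le_max_left, min_le_left]
  have hReq : R = ⋃ m ∈ Finset.range (n + 1), Set.Ico (((g m).1 : ℝ)) (((g m).2 : ℝ)) := by
    rw [hR, ht]
    ext x
    simp only [Set.mem_iUnion, Finset.mem_image, Finset.mem_range, exists_prop]
    constructor
    · rintro ⟨p, ⟨m, hm, rfl⟩, hx⟩; exact ⟨m, hm, hx⟩
    · rintro ⟨m, hm, hx⟩; exact ⟨g m, ⟨m, hm, rfl⟩, hx⟩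
  have hsub1 : ∀ m, Set.Ico (((g m).1 : ℝ)) (((g m).2 : ℝ)) ⊆ f m ∪ {((d m).1 : ℝ)} := by
    intro m
    by_cases h : Set.Ioo ((d m).1 : ℝ) ((d m).2 : ℝ) ⊆ U
    · rw [hg]; simp only [if_pos h]
      intro x hx
      simp only [Set.mem_Ico] at hx
      push_cast at hx
      obtain ⟨h1, h2⟩ := hx
      rcases eq_or_lt_of_le (le_trans (le_max_right _ _) h1) with heq | hlt'
      · exact Or.inr (by simp [heq.symm])
      · refine Or.inl ?_
        rw [hf]; simp only [if_pos h]
        exact ⟨hlt', lt_of_lt_of_le h2 (min_le_right _ _)⟩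
    · rw [hg]; simp [if_neg h]
  have hsub2 : ∀ m, f m ∩ Set.Ico (0 : ℝ) 1 ⊆ Set.Ico (((g m).1 : ℝ)) (((g m).2 : ℝ)) := by
    intro m
    by_cases h : Set.Ioo ((d m).1 : ℝ) ((d m).2 : ℝ) ⊆ U
    · rw [hf, hg]; simp only [if_pos h]
      rintro x ⟨⟨h1, h2⟩, h3, h4⟩
      push_cast
      exact ⟨max_le h3 h1.le, lt_min h4 h2⟩
    · rw [hf]; simp [if_neg h]
  have hRU : ν (R \ U) = 0 := by
    refine measure_mono_null ?_ (measure_iUnion_null (s := fun m => {((d m).1 : ℝ)}) fun m => hatom _)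
    · intro x hx
      obtain ⟨hxR, hxU⟩ := hx
      rw [hReq] at hxR
      simp only [Set.mem_iUnion, Finset.mem_range] at hxR
      obtain ⟨m, -, hm⟩ := hxR
      rcases hsub1 m hm with h | h
      · exact absurd (hfU m h) hxU
      · exact Set.mem_iUnion.2 ⟨m, h⟩
  have hAR : A \ R ⊆ (Set.Ico (0 : ℝ) 1)ᶜ := by
    intro x ⟨hxA, hxR⟩
    intro hx01
    obtain ⟨m, hmn, hm⟩ := Set.mem_accumulate.mp hxA
    apply hxR
    rw [hReq]
    exact Set.mem_biUnion (Finset.mem_range.2 (Nat.lt_succ_of_le hmn)) (hsub2 m ⟨hm, hx01⟩)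
  have hUR : ν (U \ R) < ε / 2 := by
    have hsub : U \ R ⊆ (U \ A) ∪ (A \ R) := by
      intro x ⟨hxU, hxR⟩
      by_cases hxA : x ∈ A
      · exact Or.inr ⟨hxA, hxR⟩
      · exact Or.inl ⟨hxU, hxA⟩
    calc ν (U \ R) ≤ ν ((U \ A) ∪ (A \ R)) := measure_mono hsub
      _ ≤ ν (U \ A) + ν (A \ R) := measure_union_le _ _
      _ = ν (U \ A) := by rw [measure_mono_null hAR hsupp, add_zero]
      _ < ε / 2 := hUA
  have hRUsymm : ν (R ∆ U) < ε / 2 := by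
    calc ν (R ∆ U) ≤ ν (R \ U) + ν (U \ R) := by
          rw [Set.symmDiff_def]; exact measure_union_le _ _
      _ = ν (U \ R) := by rw [hRU, zero_add]
      _ < ε / 2 := hUR
  refine ⟨R, hRrat, ?_⟩
  calc ν (R ∆ s) ≤ ν (R ∆ U) + ν (U ∆ s) := measure_symmDiff_le _ _ _
    _ < ε / 2 + ε / 2 := ENNReal.add_lt_add hRUsymm hUs
    _ = ε := ENNReal.add_halves ε

lemma isRatIcoUnion_empty : IsRatIcoUnion ∅ :=
  ⟨∅, by simp, by simp⟩

lemma isRatIcoUnion_Ico01 : IsRatIcoUnion (Set.Ico (0 : ℝ) 1) :=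
  ⟨{(0, 1)}, by norm_num, by norm_num⟩

lemma IsRatIcoUnion.subset_Ico {R : Set ℝ} (h : IsRatIcoUnion R) : R ⊆ Set.Ico (0 : ℝ) 1 := by
  obtain ⟨s, hb, rfl⟩ := h
  refine Set.iUnion₂_subset fun p hp => ?_
  obtain ⟨h1, h2⟩ := hb p hp
  exact Set.Ico_subset_Ico (by exact_mod_cast h1) (by exact_mod_cast h2)

lemma IsRatIcoUnion.union {R S : Set ℝ} (hR : IsRatIcoUnion R) (hS : IsRatIcoUnion S) :
    IsRatIcoUnion (R ∪ S) := by
  classical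
  obtain ⟨s, hbs, rfl⟩ := hR
  obtain ⟨t, hbt, rfl⟩ := hS
  refine ⟨s ∪ t, fun p hp => ?_, ?_⟩
  · rcases Finset.mem_union.1 hp with h | h
    · exact hbs p h
    · exact hbt p h
  · rw [Finset.set_biUnion_union]

lemma Ico_diff_Ico (a b c d : ℝ) :
    Set.Ico a b \ Set.Ico c d = Set.Ico a (min b c) ∪ Set.Ico (max a d) b := by
  ext x
  simp only [Set.mem_diff, Set.mem_Ico, Set.mem_union, lt_min_iff, max_le_iff, not_and, not_lt]
  constructor
  · rintro ⟨⟨ha, hb⟩, hn⟩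
    rcases lt_or_ge x c with hc | hc
    · exact Or.inl ⟨ha, hb, hc⟩
    · exact Or.inr ⟨⟨ha, hn hc⟩, hb⟩
  · rintro (⟨ha, hb, hc⟩ | ⟨⟨ha, hd⟩, hb⟩)
    · exact ⟨⟨ha, hb⟩, fun hcx => absurd hc (not_lt.2 hcx)⟩
    · exact ⟨⟨ha, hb⟩, fun _ => hd⟩

lemma biUnion_finset_image {α β γ : Type*} [DecidableEq β] (s : Finset α) (f : α → β)
    (g : β → Set γ) : ⋃ b ∈ s.image f, g b = ⋃ a ∈ s, g (f a) := by
  ext x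
  simp only [Set.mem_iUnion, Finset.mem_image, exists_prop]
  constructor
  · rintro ⟨b, ⟨a, ha, rfl⟩, hx⟩; exact ⟨a, ha, hx⟩
  · rintro ⟨a, ha, hx⟩; exact ⟨f a, ⟨a, ha, rfl⟩, hx⟩

lemma IsRatIcoUnion.diff_Ico {R : Set ℝ} (h : IsRatIcoUnion R) (c d : ℚ) :
    IsRatIcoUnion (R \ Set.Ico (c : ℝ) (d : ℝ)) := by
  classical
  obtain ⟨s, hb, rfl⟩ := h
  refine ⟨s.image (fun p => (p.1, min p.2 c)) ∪ s.image (fun p => (max p.1 d, p.2)),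
    fun p hp => ?_, ?_⟩
  · rcases Finset.mem_union.1 hp with h | h <;> obtain ⟨q, hq, rfl⟩ := Finset.mem_image.1 h
    · exact ⟨(hb q hq).1, le_trans (min_le_left _ _) (hb q hq).2⟩
    · exact ⟨le_trans (hb q hq).1 (le_max_left _ _), (hb q hq).2⟩
  · rw [Finset.set_biUnion_union, biUnion_finset_image, biUnion_finset_image]
    have : ∀ p : ℚ × ℚ, Set.Ico (p.1 : ℝ) (p.2 : ℝ) \ Set.Ico (c : ℝ) (d : ℝ) =
        Set.Ico (p.1 : ℝ) ((min p.2 c : ℚ) : ℝ) ∪ Set.Ico ((max p.1 d : ℚ) : ℝ) (p.2 : ℝ) := by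
      intro p
      rw [Ico_diff_Ico]
      push_cast
      rfl
    calc (⋃ p ∈ s, Set.Ico (p.1 : ℝ) (p.2 : ℝ)) \ Set.Ico (c : ℝ) (d : ℝ)
        = ⋃ p ∈ s, (Set.Ico (p.1 : ℝ) (p.2 : ℝ) \ Set.Ico (c : ℝ) (d : ℝ)) := by
          simp_rw [Set.iUnion_diff]
      _ = ⋃ p ∈ s, (Set.Ico (p.1 : ℝ) ((min p.2 c : ℚ) : ℝ) ∪
            Set.Ico ((max p.1 d : ℚ) : ℝ) (p.2 : ℝ)) := by
          refine Set.iUnion₂_congr fun p _ => this p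
      _ = (⋃ p ∈ s, Set.Ico (p.1 : ℝ) ((min p.2 c : ℚ) : ℝ)) ∪
            ⋃ p ∈ s, Set.Ico ((max p.1 d : ℚ) : ℝ) (p.2 : ℝ) := by
          simp_rw [Set.iUnion_union_distrib]
      _ = _ := by rfl

lemma IsRatIcoUnion.sdiff {R S : Set ℝ} (hR : IsRatIcoUnion R) (hS : IsRatIcoUnion S) :
    IsRatIcoUnion (R \ S) := by
  classical
  obtain ⟨t, -, rfl⟩ := hS
  induction t using Finset.induction generalizing R with
  | empty => simpa using hR
  | insert _ _ hnot ih =>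
    rw [Finset.set_biUnion_insert, ← Set.diff_diff]
    exact ih (hR.diff_Ico _ _)

lemma IsRatIcoUnion.biUnion {ι : Type*} (t : Finset ι) (S : ι → Set ℝ)
    (h : ∀ i ∈ t, IsRatIcoUnion (S i)) : IsRatIcoUnion (⋃ i ∈ t, S i) := by
  classical
  induction t using Finset.induction with
  | empty => simpa using isRatIcoUnion_empty
  | insert _ _ hnot ih =>
    rw [Finset.set_biUnion_insert]
    exact (h _ (Finset.mem_insert_self _ _)).union
      (ih fun i hi => h i (Finset.mem_insert_of_mem hi))


/-- If a super-fair Borel partition exists for non-atomic Borel probability measures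
`μ 0, …, μ (k-1)` on `[0,1)`, then a super-fair partition exists in `𝒬`, i.e. one in
which every piece is a finite union of half-open intervals with rational endpoints. -/
theorem superfair_rational_partition
    (k : ℕ) (μ : Fin k → Measure ℝ) [∀ i, IsProbabilityMeasure (μ i)]
    (hsupp : ∀ i, μ i (Set.Ico (0 : ℝ) 1)ᶜ = 0)
    (hatom : ∀ i (x : ℝ), μ i {x} = 0)
    (B : Fin k → Set ℝ)
    (hmeas : ∀ j, MeasurableSet (B j))
    (hdisj : ∀ j j', j ≠ j' → Disjoint (B j) (B j'))
    (hcover : (⋃ j, B j) = Set.Ico (0 : ℝ) 1)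
    (hfair : ∀ i, (k : ℝ≥0∞)⁻¹ < μ i (B i)) :
    ∃ Q : Fin k → Set ℝ,
      (∀ j, IsRatIcoUnion (Q j)) ∧
      (∀ j j', j ≠ j' → Disjoint (Q j) (Q j')) ∧
      (⋃ j, Q j) = Set.Ico (0 : ℝ) 1 ∧
      ∀ i, (k : ℝ≥0∞)⁻¹ < μ i (Q i) := by
  classical
  rcases Nat.eq_zero_or_pos k with rfl | hk
  · exfalso
    have h0 : (0 : ℝ) ∈ Set.Ico (0 : ℝ) 1 := ⟨le_refl _, zero_lt_one⟩
    rw [← hcover] at h0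
    obtain ⟨j, -⟩ := Set.mem_iUnion.1 h0
    exact j.elim0
  haveI : Nonempty (Fin k) := ⟨⟨0, hk⟩⟩
  set ν : Measure ℝ := ∑ i, μ i with hν
  have hνapp : ∀ s : Set ℝ, ν s = ∑ i, μ i s := fun s => by
    rw [hν]; exact Measure.finset_sum_apply _ _ _
  haveI : IsFiniteMeasure ν := by
    constructor
    rw [hνapp]
    simp only [measure_univ, Finset.sum_const, Finset.card_univ, Fintype.card_fin,
      nsmul_eq_mul, mul_one]
    exact ENNReal.natCast_lt_top k
  have hle : ∀ i (s : Set ℝ), μ i s ≤ ν s := fun i s => by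
    rw [hνapp]
    exact Finset.single_le_sum (f := fun j => μ j s) (fun j _ => zero_le) (Finset.mem_univ i)
  have hνsupp : ν (Set.Ico (0 : ℝ) 1)ᶜ = 0 := by rw [hνapp]; simp [hsupp]
  have hνatom : ∀ x : ℝ, ν {x} = 0 := fun x => by rw [hνapp]; simp [hatom]
  have hBfin : ∀ i, μ i (B i) ≤ 1 := fun i => prob_le_one
  set δ : ℝ≥0∞ := Finset.univ.inf' Finset.univ_nonempty
    (fun i => μ i (B i) - (k : ℝ≥0∞)⁻¹) with hδ
  have hδpos : 0 < δ := by
    rw [hδ, Finset.lt_inf'_iff]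
    exact fun i _ => tsub_pos_of_lt (hfair i)
  have hδle : ∀ i, δ ≤ μ i (B i) - (k : ℝ≥0∞)⁻¹ := fun i =>
    Finset.inf'_le _ (Finset.mem_univ i)
  have hδtop : δ ≠ ∞ := by
    obtain ⟨i⟩ := ‹Nonempty (Fin k)›
    exact ne_top_of_le_ne_top ENNReal.one_ne_top
      ((hδle i).trans (tsub_le_self.trans (hBfin i)))
  have hδ20 : δ / 2 ≠ 0 := (ENNReal.half_pos hδpos.ne').ne'
  have hδ2top : δ / 2 ≠ ∞ := by
    exact ne_top_of_le_ne_top hδtop ENNReal.half_le_self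
  set c : ℝ≥0∞ := (k : ℝ≥0∞) + 1 with hc
  have hctop : c ≠ ∞ := by
    rw [hc]; exact ENNReal.add_ne_top.2 ⟨ENNReal.natCast_ne_top k, ENNReal.one_ne_top⟩
  set ε : ℝ≥0∞ := δ / 2 / c with hε
  have hε0 : ε ≠ 0 := by
    rw [hε]
    exact (ENNReal.div_pos hδ20 hctop).ne'
  have hcε : c * ε ≤ δ / 2 := by rw [hε]; exact ENNReal.mul_div_le
  choose R hRrat hRerr using fun j => ratApprox ν hνsupp hνatom (B j) (hmeas j) hε0
  set i0 : Fin k := ⟨0, hk⟩ with hi0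
  set L : Set ℝ := Set.Ico (0 : ℝ) 1 \ ⋃ j, R j with hL
  set D : Fin k → Set ℝ := fun j => R j \ ⋃ j' ∈ Finset.Iio j, R j' with hD
  set Q : Fin k → Set ℝ := fun j => if j = i0 then R i0 ∪ L else D j with hQ
  have hQdef : ∀ j, Q j = if j = i0 then R i0 ∪ L else D j := fun j => rfl
  have hDsub : ∀ j, D j ⊆ R j := fun j => Set.diff_subset
  have hQD : ∀ j, D j ⊆ Q j := by
    intro j
    rw [hQdef j]
    by_cases h : j = i0
    · rw [if_pos h]
      intro x hx
      exact Or.inl (h ▸ hDsub j hx)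
    · rw [if_neg h]
  have hQRL : ∀ j, Q j ⊆ R j ∪ L := by
    intro j
    rw [hQdef j]
    by_cases h : j = i0
    · rw [if_pos h]
      intro x hx
      rcases hx with hx | hx
      · exact Or.inl (h ▸ hx)
      · exact Or.inr hx
    · rw [if_neg h]
      exact (hDsub j).trans Set.subset_union_left
  have hLR : ∀ j x, x ∈ L → x ∉ R j := by
    intro j x hx hxR
    exact hx.2 (Set.mem_iUnion.2 ⟨j, hxR⟩)
  have hne_i0 : ∀ {j j' : Fin k}, j < j' → j' ≠ i0 := by
    intro j j' hlt h
    subst h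
    exact Nat.not_lt_zero j.val hlt
  have hcore : ∀ j j' : Fin k, j < j' → ∀ x, x ∈ Q j → x ∉ Q j' := by
    intro j j' hlt x hxj hxj'
    have hj' : Q j' = D j' := by rw [hQdef j', if_neg (hne_i0 hlt)]
    rw [hj'] at hxj'
    obtain ⟨hxR', hxn⟩ := hxj'
    have hnot : ∀ j'', j'' < j' → x ∉ R j'' := by
      intro j'' h hmem
      exact hxn (Set.mem_biUnion (Finset.mem_Iio.2 h) hmem)
    rcases hQRL j hxj with h | h
    · exact hnot j hlt h
    · exact hLR j' x h hxR'
  refine ⟨Q, ?_, ?_, ?_, ?_⟩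
  · -- each Q j is a rational Ico union
    intro j
    have hUR : (⋃ j, R j) = ⋃ j ∈ Finset.univ, R j := by simp
    have hallrat : IsRatIcoUnion (⋃ j, R j) := by
      rw [hUR]; exact IsRatIcoUnion.biUnion _ _ fun j _ => hRrat j
    have hLrat : IsRatIcoUnion L := isRatIcoUnion_Ico01.sdiff hallrat
    rw [hQdef j]
    by_cases h : j = i0
    · rw [if_pos h]
      exact (hRrat i0).union hLrat
    · rw [if_neg h]
      exact (hRrat j).sdiff (IsRatIcoUnion.biUnion _ _ fun j' _ => hRrat j')
  · -- disjointness
    intro j j' hne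
    rcases lt_or_gt_of_ne hne with hlt | hlt
    · exact Set.disjoint_left.2 fun {x} hx hx' => hcore j j' hlt x hx hx'
    · exact Set.disjoint_left.2 fun {x} hx hx' => hcore j' j hlt x hx' hx
  · -- cover
    apply Set.Subset.antisymm
    · refine Set.iUnion_subset fun j => (hQRL j).trans ?_
      refine Set.union_subset (hRrat j).subset_Ico ?_
      rw [hL]; exact Set.diff_subset
    · intro x hx
      by_cases hxR : x ∈ ⋃ j, R j
      · obtain ⟨j, hj⟩ := Set.mem_iUnion.1 hxR
        set T : Finset (Fin k) := Finset.univ.filter (fun j => x ∈ R j) with hT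
        have hTne : T.Nonempty := ⟨j, Finset.mem_filter.2 ⟨Finset.mem_univ _, hj⟩⟩
        set jm := T.min' hTne with hjm
        have hxjm : x ∈ R jm := (Finset.mem_filter.1 (T.min'_mem hTne)).2
        have hxD : x ∈ D jm := by
          refine ⟨hxjm, ?_⟩
          intro hmem
          obtain ⟨j'', hj''⟩ := Set.mem_iUnion.1 hmem
          obtain ⟨hj''lt, hj''mem⟩ := Set.mem_iUnion.1 hj''
          have : j'' ∈ T := Finset.mem_filter.2 ⟨Finset.mem_univ _, hj''mem⟩
          exact absurd (T.min'_le _ this) (not_le.2 (Finset.mem_Iio.1 hj''lt))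
        exact Set.mem_iUnion.2 ⟨jm, hQD jm hxD⟩
      · refine Set.mem_iUnion.2 ⟨i0, ?_⟩
        rw [hQdef i0, if_pos rfl]
        exact Or.inr ⟨hx, hxR⟩
  · -- measure bound
    intro i
    have herr : ∀ j (s : Set ℝ), s ⊆ R j ∆ B j → μ i s ≤ ε := fun j s hs =>
      ((measure_mono hs).trans (hle i _)).trans (hRerr j).le
    have hsubB : B i ⊆ D i ∪ ((B i \ R i) ∪ ⋃ j ∈ Finset.univ, (R j \ B j)) := by
      intro x hx
      by_cases hxR : x ∈ R i
      · by_cases hxD : x ∈ D i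
        · exact Or.inl hxD
        · have : ∃ j' , j' < i ∧ x ∈ R j' := by
            rw [hD] at hxD
            simp only [Set.mem_diff, hxR, true_and, not_not] at hxD
            obtain ⟨j', hj'⟩ := Set.mem_iUnion.1 hxD
            obtain ⟨h1, h2⟩ := Set.mem_iUnion.1 hj'
            exact ⟨j', Finset.mem_Iio.1 h1, h2⟩
          obtain ⟨j', hj'lt, hj'mem⟩ := this
          have hxBj' : x ∉ B j' :=
            fun hmem => Set.disjoint_left.1 (hdisj j' i (ne_of_lt hj'lt)) hmem hx
          exact Or.inr (Or.inr (Set.mem_biUnion (Finset.mem_univ j') ⟨hj'mem, hxBj'⟩))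
      · exact Or.inr (Or.inl ⟨hx, hxR⟩)
    have key : μ i (B i) ≤ μ i (D i) + δ / 2 := by
      have h1 : μ i (B i) ≤ μ i (D i) + (μ i (B i \ R i) +
          ∑ j, μ i (R j \ B j)) := by
        calc μ i (B i) ≤ μ i (D i ∪ ((B i \ R i) ∪ ⋃ j ∈ Finset.univ, (R j \ B j))) :=
              measure_mono hsubB
          _ ≤ μ i (D i) + μ i ((B i \ R i) ∪ ⋃ j ∈ Finset.univ, (R j \ B j)) :=
              measure_union_le _ _
          _ ≤ μ i (D i) + (μ i (B i \ R i) + μ i (⋃ j ∈ Finset.univ, (R j \ B j))) := by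
              gcongr
              exact measure_union_le _ _
          _ ≤ μ i (D i) + (μ i (B i \ R i) + ∑ j, μ i (R j \ B j)) := by
              gcongr
              exact measure_biUnion_finset_le _ _
      have h2 : μ i (B i \ R i) ≤ ε :=
        herr i _ (by rw [Set.symmDiff_def]; exact Set.subset_union_right)
      have h3 : ∑ j, μ i (R j \ B j) ≤ (k : ℝ≥0∞) * ε := by
        calc ∑ j, μ i (R j \ B j) ≤ ∑ _j : Fin k, ε := by
              refine Finset.sum_le_sum fun j _ => ?_
              exact herr j _ (by rw [Set.symmDiff_def]; exact Set.subset_union_left)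
          _ = (k : ℝ≥0∞) * ε := by
              simp [Finset.sum_const, Finset.card_univ, nsmul_eq_mul]
      have h4 : μ i (B i \ R i) + ∑ j, μ i (R j \ B j) ≤ δ / 2 := by
        calc μ i (B i \ R i) + ∑ j, μ i (R j \ B j) ≤ ε + (k : ℝ≥0∞) * ε :=
              add_le_add h2 h3
          _ = c * ε := by rw [hc]; ring
          _ ≤ δ / 2 := hcε
      exact h1.trans (by gcongr)
    have h1 : (k : ℝ≥0∞)⁻¹ + δ ≤ μ i (B i) := by
      rw [← add_tsub_cancel_of_le (hfair i).le]
      exact add_le_add_right (hδle i) _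
    have h2 : (k : ℝ≥0∞)⁻¹ + δ ≤ μ i (D i) + δ / 2 := h1.trans key
    have h2' : (k : ℝ≥0∞)⁻¹ + δ / 2 + δ / 2 ≤ μ i (D i) + δ / 2 := by
      rw [add_assoc, ENNReal.add_halves]; exact h2
    have h3 : (k : ℝ≥0∞)⁻¹ + δ / 2 ≤ μ i (D i) :=
      (ENNReal.add_le_add_iff_right hδ2top).1 h2'
    have hinvtop : (k : ℝ≥0∞)⁻¹ ≠ ∞ :=
      ENNReal.inv_ne_top.2 (Nat.cast_ne_zero.2 hk.ne')
    calc (k : ℝ≥0∞)⁻¹ < (k : ℝ≥0∞)⁻¹ + δ / 2 := ENNReal.lt_add_right hinvtop hδ20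
      _ ≤ μ i (D i) := h3
      _ ≤ μ i (Q i) := measure_mono (hQD i)
end

section
/- Let μ_1, …, μ_k be non-atomic Borel probability measures on [0,1) such that some Borel partition B_1,…,B_k of [0,1) satisfies μ_i(B_i) > 1/k for all i. Let D be a probability distribution on the countable set 𝒬 of partitions of [0,1) into finite unions of half-open rational-endpoint intervals, such that D assigns strictly positive probability to every element of 𝒬 (its support is all of 𝒬). Then the probability under D that the drawn partition (C_1,…,C_k) satisfies μ_i(C_i) > 1/k for every i is strictly positive. -/
open MeasureTheory
open scoped ENNReal symmDiff

/-- `Q` is a member of `𝒬`: a partition of `[0,1)` into `k` pieces, each a finite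
union of half-open intervals with rational endpoints. -/
def IsQPartition (k : ℕ) (Q : Fin k → Set ℝ) : Prop :=
  (∀ j, IsRatIcoUnion (Q j)) ∧
    (∀ j j', j ≠ j' → Disjoint (Q j) (Q j')) ∧
    (⋃ j, Q j) = Set.Ico (0 : ℝ) 1

namespace RatU

lemma empty : IsRatIcoUnion ∅ := ⟨∅, by simp, by simp⟩

lemma single (a b : ℚ) (h0 : 0 ≤ a) (h1 : b ≤ 1) :
    IsRatIcoUnion (Set.Ico (a : ℝ) (b : ℝ)) :=
  ⟨{(a, b)}, by simp [h0, h1], by simp⟩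

lemma Ico01 : IsRatIcoUnion (Set.Ico (0 : ℝ) 1) := by
  have := single 0 1 le_rfl le_rfl
  simpa using this

lemma subset {R : Set ℝ} (h : IsRatIcoUnion R) : R ⊆ Set.Ico (0 : ℝ) 1 := by
  obtain ⟨s, hs, rfl⟩ := h
  intro x hx
  simp only [Set.mem_iUnion] at hx
  obtain ⟨p, hp, hx⟩ := hx
  obtain ⟨h0, h1⟩ := hs p hp
  obtain ⟨hx1, hx2⟩ := hx
  constructor
  · exact le_trans (by exact_mod_cast h0) hx1
  · exact lt_of_lt_of_le hx2 (by exact_mod_cast h1)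

lemma measurableSet {R : Set ℝ} (h : IsRatIcoUnion R) : MeasurableSet R := by
  obtain ⟨s, _, rfl⟩ := h
  exact s.measurableSet_biUnion (fun p _ => measurableSet_Ico)

lemma union {R R' : Set ℝ} (h : IsRatIcoUnion R) (h' : IsRatIcoUnion R') :
    IsRatIcoUnion (R ∪ R') := by
  obtain ⟨s, hs, rfl⟩ := h
  obtain ⟨t, ht, rfl⟩ := h'
  refine ⟨s ∪ t, ?_, ?_⟩
  · intro p hp
    rcases Finset.mem_union.1 hp with hp | hp
    exacts [hs p hp, ht p hp]
  · ext x
    simp only [Set.mem_union, Set.mem_iUnion, Finset.mem_union]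
    constructor
    · rintro (⟨p, hp, hx⟩ | ⟨p, hp, hx⟩)
      exacts [⟨p, Or.inl hp, hx⟩, ⟨p, Or.inr hp, hx⟩]
    · rintro ⟨p, hp | hp, hx⟩
      exacts [Or.inl ⟨p, hp, hx⟩, Or.inr ⟨p, hp, hx⟩]

lemma inter {R R' : Set ℝ} (h : IsRatIcoUnion R) (h' : IsRatIcoUnion R') :
    IsRatIcoUnion (R ∩ R') := by
  obtain ⟨s, hs, rfl⟩ := h
  obtain ⟨t, ht, rfl⟩ := h'
  refine ⟨(s ×ˢ t).image (fun pq => (max pq.1.1 pq.2.1, min pq.1.2 pq.2.2)), ?_, ?_⟩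
  · intro p hp
    simp only [Finset.mem_image, Finset.mem_product] at hp
    obtain ⟨⟨p1, p2⟩, ⟨hp1, hp2⟩, rfl⟩ := hp
    exact ⟨le_max_of_le_left (hs _ hp1).1, min_le_of_left_le (hs _ hp1).2⟩
  · ext x
    simp only [Set.mem_inter_iff, Set.mem_iUnion, Finset.mem_image, Finset.mem_product]
    constructor
    · rintro ⟨⟨p, hp, hxp⟩, ⟨q, hq, hxq⟩⟩
      refine ⟨(max p.1 q.1, min p.2 q.2), ⟨(p, q), ⟨hp, hq⟩, rfl⟩, ?_⟩
      push_cast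
      exact ⟨max_le hxp.1 hxq.1, lt_min hxp.2 hxq.2⟩
    · rintro ⟨r, ⟨⟨p, q⟩, ⟨hp, hq⟩, rfl⟩, hx⟩
      push_cast at hx
      obtain ⟨hx1, hx2⟩ := hx
      exact ⟨⟨p, hp, le_of_max_le_left hx1, lt_of_lt_of_le hx2 (min_le_left _ _)⟩,
        ⟨q, hq, le_of_max_le_right hx1, lt_of_lt_of_le hx2 (min_le_right _ _)⟩⟩

lemma compl01_Ico (a b : ℚ) :
    Set.Ico (0 : ℝ) 1 \ Set.Ico (a : ℝ) (b : ℝ)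
      = Set.Ico (0 : ℝ) ((min a 1 : ℚ) : ℝ) ∪ Set.Ico ((max b 0 : ℚ) : ℝ) 1 := by
  ext x
  push_cast
  simp only [Set.mem_diff, Set.mem_Ico, Set.mem_union, not_and, not_lt, lt_min_iff, max_le_iff]
  constructor
  · rintro ⟨⟨h0, h1⟩, h⟩
    rcases lt_or_ge x (a : ℝ) with hxa | hxa
    · exact Or.inl ⟨h0, hxa, h1⟩
    · exact Or.inr ⟨⟨h hxa, h0⟩, h1⟩
  · rintro (⟨h0, hxa, h1⟩ | ⟨⟨hb, h0⟩, h1⟩)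
    · exact ⟨⟨h0, h1⟩, fun h => absurd h (not_le.2 hxa)⟩
    · exact ⟨⟨h0, h1⟩, fun _ => hb⟩

lemma compl01 {R : Set ℝ} (h : IsRatIcoUnion R) :
    IsRatIcoUnion (Set.Ico (0 : ℝ) 1 \ R) := by
  obtain ⟨s, hs, rfl⟩ := h
  clear hs
  induction s using Finset.induction_on with
  | empty => simpa using Ico01
  | insert p s hns ih =>
    have heq : Set.Ico (0:ℝ) 1 \ ⋃ q ∈ insert p s, Set.Ico (q.1 : ℝ) (q.2 : ℝ)
        = (Set.Ico (0:ℝ) 1 \ Set.Ico (p.1 : ℝ) (p.2 : ℝ))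
          ∩ (Set.Ico (0:ℝ) 1 \ ⋃ q ∈ s, Set.Ico (q.1 : ℝ) (q.2 : ℝ)) := by
      ext x
      simp only [Set.mem_diff, Set.mem_iUnion, Set.mem_inter_iff, Finset.mem_insert,
        not_exists]
      constructor
      · rintro ⟨hx, h⟩
        exact ⟨⟨hx, h p (Or.inl rfl)⟩, hx, fun q hq => h q (Or.inr hq)⟩
      · rintro ⟨⟨hx, hp⟩, -, h⟩
        refine ⟨hx, ?_⟩
        rintro q (rfl | hq)
        exacts [hp, h q hq]
    rw [heq]
    refine inter ?_ ih
    rw [compl01_Ico]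
    exact union
      (by exact_mod_cast single 0 (min p.1 1) le_rfl (min_le_right _ _))
      (by exact_mod_cast single (max p.2 0) 1 (le_max_right _ _) le_rfl)

lemma diff {R R' : Set ℝ} (h : IsRatIcoUnion R) (h' : IsRatIcoUnion R') :
    IsRatIcoUnion (R \ R') := by
  have : R \ R' = R ∩ (Set.Ico (0:ℝ) 1 \ R') := by
    have hR := subset h
    ext x
    constructor
    · rintro ⟨hx, hx'⟩
      exact ⟨hx, hR hx, hx'⟩
    · rintro ⟨hx, -, hx'⟩
      exact ⟨hx, hx'⟩
  rw [this]
  exact inter h (compl01 h')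

lemma biUnion {ι : Type*} [DecidableEq ι] (s : Finset ι) (f : ι → Set ℝ)
    (hf : ∀ i ∈ s, IsRatIcoUnion (f i)) : IsRatIcoUnion (⋃ i ∈ s, f i) := by
  induction s using Finset.induction_on with
  | empty => simpa using empty
  | insert a s hns ih =>
    rw [Finset.set_biUnion_insert]
    exact union (hf a (Finset.mem_insert_self a s)) (ih fun i hi => hf i (Finset.mem_insert_of_mem hi))

lemma iUnion_cond {k : ℕ} (f : Fin k → Set ℝ) (P : Fin k → Prop) [DecidablePred P]
    (hf : ∀ j, IsRatIcoUnion (f j)) :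
    IsRatIcoUnion (⋃ (j : Fin k) (_ : P j), f j) := by
  have : (⋃ (j : Fin k) (_ : P j), f j) = ⋃ j ∈ Finset.univ.filter P, f j := by
    ext x; simp
  rw [this]
  exact biUnion _ _ (fun i _ => hf i)

end RatU

open RatU in
/-- The algebra on `ℝ` generated by rational `Ico` subsets of `[0,1)`. -/
def QAlg : Set (Set ℝ) :=
  {S | IsRatIcoUnion S ∨ ∃ R, IsRatIcoUnion R ∧ S = R ∪ (Set.Ico (0:ℝ) 1)ᶜ}

open RatU in
lemma isSetAlgebra_QAlg : IsSetAlgebra QAlg where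
  empty_mem := Or.inl RatU.empty
  compl_mem := by
    rintro S (hS | ⟨R, hR, rfl⟩)
    · refine Or.inr ⟨Set.Ico (0:ℝ) 1 \ S, compl01 hS, ?_⟩
      have hsub := subset hS
      ext x
      by_cases hx : x ∈ Set.Ico (0:ℝ) 1 <;> simp [hx] <;> tauto
    · refine Or.inl ?_
      have : (R ∪ (Set.Ico (0:ℝ) 1)ᶜ)ᶜ = Set.Ico (0:ℝ) 1 \ R := by
        rw [Set.compl_union, compl_compl]
        exact Set.inter_comm _ _
      rw [this]
      exact compl01 hR
  union_mem := by
    rintro S T (hS | ⟨R, hR, rfl⟩) (hT | ⟨R', hR', rfl⟩)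
    · exact Or.inl (union hS hT)
    · exact Or.inr ⟨S ∪ R', union hS hR', by rw [Set.union_assoc]⟩
    · exact Or.inr ⟨R ∪ T, union hR hT, by
        rw [Set.union_assoc, Set.union_assoc, Set.union_comm (Set.Ico (0:ℝ) 1)ᶜ T]⟩
    · exact Or.inr ⟨R ∪ R', union hR hR', by
        rw [Set.union_assoc, Set.union_assoc, ← Set.union_assoc (Set.Ico (0:ℝ) 1)ᶜ,
          Set.union_comm (Set.Ico (0:ℝ) 1)ᶜ R', Set.union_assoc, Set.union_self]⟩

/-- The σ-algebra generated by `QAlg`. -/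
def m0 : MeasurableSpace ℝ := MeasurableSpace.generateFrom QAlg

lemma m0_le : m0 ≤ (inferInstance : MeasurableSpace ℝ) := by
  refine MeasurableSpace.generateFrom_le ?_
  rintro S (hS | ⟨R, hR, rfl⟩)
  · exact RatU.measurableSet hS
  · exact (RatU.measurableSet hR).union measurableSet_Ico.compl

lemma Ico01_mem_m0 : MeasurableSet[m0] (Set.Ico (0:ℝ) 1) :=
  MeasurableSpace.measurableSet_generateFrom (Or.inl RatU.Ico01)

lemma Ioo_inter_Ico01_mem_m0 (a b : ℚ) :
    MeasurableSet[m0] (Set.Ioo (a : ℝ) (b : ℝ) ∩ Set.Ico (0:ℝ) 1) := by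
  have heq : Set.Ioo (a : ℝ) (b : ℝ) ∩ Set.Ico (0:ℝ) 1
      = ⋃ q : ℚ, if a < q then Set.Ico ((max q 0 : ℚ) : ℝ) ((min b 1 : ℚ) : ℝ) else ∅ := by
    ext x
    simp only [Set.mem_inter_iff, Set.mem_Ioo, Set.mem_Ico, Set.mem_iUnion]
    constructor
    · rintro ⟨⟨hax, hxb⟩, h0x, hx1⟩
      obtain ⟨q, hq1, hq2⟩ := exists_rat_btwn hax
      refine ⟨q, ?_⟩
      rw [if_pos (by exact_mod_cast hq1)]
      push_cast
      exact ⟨max_le hq2.le h0x, lt_min hxb hx1⟩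
    · rintro ⟨q, hq⟩
      split_ifs at hq with h
      · push_cast at hq
        obtain ⟨h1, h2⟩ := hq
        refine ⟨⟨lt_of_lt_of_le (by exact_mod_cast h) (le_trans (le_max_left _ _) h1), ?_⟩,
          le_trans (le_max_right _ _) h1, ?_⟩
        · exact lt_of_lt_of_le h2 (min_le_left _ _)
        · exact lt_of_lt_of_le h2 (min_le_right _ _)
      · exact absurd hq (Set.notMem_empty x)
  rw [heq]
  refine MeasurableSet.iUnion (fun q => ?_)
  split_ifs with h
  · exact MeasurableSpace.measurableSet_generateFrom
      (Or.inl (RatU.single (max q 0) (min b 1) (le_max_right _ _) (min_le_right _ _)))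
  · exact @MeasurableSet.empty ℝ m0

/-- Every Borel subset of `[0,1)` lies in `m0`. -/
lemma mem_m0_of_measurable {S : Set ℝ} (hS : MeasurableSet S) (hsub : S ⊆ Set.Ico (0:ℝ) 1) :
    MeasurableSet[m0] S := by
  let m1 : MeasurableSpace ℝ :=
    { MeasurableSet' := fun T => MeasurableSet[m0] (T ∩ Set.Ico (0:ℝ) 1)
      measurableSet_empty := by
        simpa using @MeasurableSet.empty ℝ m0
      measurableSet_compl := by
        intro T hT
        have : Tᶜ ∩ Set.Ico (0:ℝ) 1 = Set.Ico (0:ℝ) 1 \ (T ∩ Set.Ico (0:ℝ) 1) := by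
          ext x; by_cases hx : x ∈ Set.Ico (0:ℝ) 1 <;> simp [hx]
        rw [this]
        exact Ico01_mem_m0.diff hT
      measurableSet_iUnion := by
        intro f hf
        rw [Set.iUnion_inter]
        exact MeasurableSet.iUnion hf }
  have hle : borel ℝ ≤ m1 := by
    rw [Real.borel_eq_generateFrom_Ioo_rat]
    refine MeasurableSpace.generateFrom_le ?_
    intro t ht
    simp only [Set.mem_iUnion, Set.mem_singleton_iff] at ht
    obtain ⟨a, b, -, rfl⟩ := ht
    exact Ioo_inter_Ico01_mem_m0 a b
  have h1 : MeasurableSet[m1] S := hle _ (show MeasurableSet[borel ℝ] S from hS)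
  have : S ∩ Set.Ico (0:ℝ) 1 = S := Set.inter_eq_left.2 hsub
  show MeasurableSet[m0] S
  rw [← this]
  exact h1

lemma approx_lemma (ν : Measure ℝ) [IsFiniteMeasure ν] (hν : ν (Set.Ico (0:ℝ) 1)ᶜ = 0)
    {S : Set ℝ} (hS : MeasurableSet S) (hsub : S ⊆ Set.Ico (0:ℝ) 1)
    (ε : ℝ) (hε : 0 < ε) :
    ∃ R, IsRatIcoUnion R ∧ ν (S ∆ R) < ENNReal.ofReal ε := by
  have hdense : @Measure.MeasureDense ℝ m0 (ν.trim m0_le) QAlg :=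
    @Measure.MeasureDense.of_generateFrom_isSetAlgebra_finite ℝ m0 (ν.trim m0_le) QAlg
      (isFiniteMeasure_trim m0_le) isSetAlgebra_QAlg rfl
  have hSm0 : MeasurableSet[m0] S := mem_m0_of_measurable hS hsub
  have hne : ν.trim m0_le S ≠ ⊤ :=
    @measure_ne_top ℝ m0 (ν.trim m0_le) (isFiniteMeasure_trim m0_le) S
  obtain ⟨t, htQ, hlt⟩ := @Measure.MeasureDense.approx ℝ m0 _ _ hdense S hSm0 hne ε hε
  have ht0 : MeasurableSet[m0] t := MeasurableSpace.measurableSet_generateFrom htQ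
  have hΔ : MeasurableSet[m0] (S ∆ t) := (hSm0.diff ht0).union (ht0.diff hSm0)
  rw [trim_measurableSet_eq m0_le hΔ] at hlt
  rcases htQ with h | ⟨R, hR, rfl⟩
  · exact ⟨t, h, hlt⟩
  · refine ⟨R, hR, lt_of_le_of_lt ?_ hlt⟩
    have hincl : S ∆ R ⊆ (S ∆ (R ∪ (Set.Ico (0:ℝ) 1)ᶜ)) ∪ (Set.Ico (0:ℝ) 1)ᶜ := by
      intro x hx
      rw [Set.mem_symmDiff] at hx
      rcases hx with ⟨hxS, hxnR⟩ | ⟨hxR, hxnS⟩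
      · by_cases hxC : x ∈ Set.Ico (0:ℝ) 1
        · refine Or.inl (Set.mem_symmDiff.2 (Or.inl ⟨hxS, ?_⟩))
          rintro (h | h)
          exacts [hxnR h, h hxC]
        · exact Or.inr hxC
      · exact Or.inl (Set.mem_symmDiff.2 (Or.inr ⟨Or.inl hxR, hxnS⟩))
    calc ν (S ∆ R) ≤ ν ((S ∆ (R ∪ (Set.Ico (0:ℝ) 1)ᶜ)) ∪ (Set.Ico (0:ℝ) 1)ᶜ) :=
          measure_mono hincl
      _ ≤ ν (S ∆ (R ∪ (Set.Ico (0:ℝ) 1)ᶜ)) + ν (Set.Ico (0:ℝ) 1)ᶜ := measure_union_le _ _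
      _ = ν (S ∆ (R ∪ (Set.Ico (0:ℝ) 1)ᶜ)) := by rw [hν, add_zero]

lemma partition_construction {k : ℕ} (hk : 0 < k) (B R : Fin k → Set ℝ)
    (hBsub : ∀ j, B j ⊆ Set.Ico (0:ℝ) 1)
    (hBdisj : ∀ j j', j ≠ j' → Disjoint (B j) (B j'))
    (hBcover : (⋃ j, B j) = Set.Ico (0 : ℝ) 1)
    (hR : ∀ j, IsRatIcoUnion (R j)) :
    ∃ C : Fin k → Set ℝ, IsQPartition k C ∧ ∀ i, B i ∆ C i ⊆ ⋃ j, B j ∆ R j := by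
  classical
  set z : Fin k := ⟨0, hk⟩ with hz
  set T : Fin k → Set ℝ := fun j => R j \ ⋃ (j' : Fin k) (_ : j' < j), R j' with hT
  set C : Fin k → Set ℝ :=
    fun j => if j = z then Set.Ico (0:ℝ) 1 \ ⋃ (j' : Fin k) (_ : j' ≠ z), T j' else T j with hC
  have hTsub : ∀ j, T j ⊆ R j := fun j => Set.diff_subset
  have hTrat : ∀ j, IsRatIcoUnion (T j) :=
    fun j => RatU.diff (hR j) (RatU.iUnion_cond R (· < j) hR)
  have hTdisj : ∀ j j', j ≠ j' → Disjoint (T j) (T j') := by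
    have key : ∀ j j' : Fin k, j' < j → Disjoint (T j) (T j') := by
      intro j j' hlt
      rw [Set.disjoint_left]
      intro x hx hx'
      exact hx.2 (Set.mem_iUnion.2 ⟨j', Set.mem_iUnion.2 ⟨hlt, hTsub j' hx'⟩⟩)
    intro j j' hne
    rcases lt_or_gt_of_ne hne with h | h
    · exact (key j' j h).symm
    · exact key j j' h
  have hCz : C z = Set.Ico (0:ℝ) 1 \ ⋃ (j' : Fin k) (_ : j' ≠ z), T j' := by
    simp [hC]
  have hCne : ∀ j, j ≠ z → C j = T j := by
    intro j hj; simp [hC, hj]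
  have hCsub : ∀ j, C j ⊆ Set.Ico (0:ℝ) 1 := by
    intro j
    by_cases hj : j = z
    · subst hj; rw [hCz]; exact Set.diff_subset
    · rw [hCne j hj]
      exact (hTsub j).trans (RatU.subset (hR j))
  have hCrat : ∀ j, IsRatIcoUnion (C j) := by
    intro j
    by_cases hj : j = z
    · subst hj
      rw [hCz]
      exact RatU.diff RatU.Ico01 (RatU.iUnion_cond T (· ≠ z) hTrat)
    · rw [hCne j hj]; exact hTrat j
  have hCdisj : ∀ j j', j ≠ j' → Disjoint (C j) (C j') := by
    have key : ∀ j, j ≠ z → Disjoint (C z) (C j) := by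
      intro j hj
      rw [hCz, hCne j hj, Set.disjoint_left]
      intro x hx hx'
      exact hx.2 (Set.mem_iUnion.2 ⟨j, Set.mem_iUnion.2 ⟨hj, hx'⟩⟩)
    intro j j' hne
    by_cases hj : j = z
    · subst hj; exact key j' (fun h => hne h.symm)
    · by_cases hj' : j' = z
      · subst hj'; exact (key j hj).symm
      · rw [hCne j hj, hCne j' hj']
        exact hTdisj j j' hne
  have hCcover : (⋃ j, C j) = Set.Ico (0:ℝ) 1 := by
    apply Set.Subset.antisymm
    · exact Set.iUnion_subset hCsub
    · intro x hx
      by_cases hxT : ∃ j, j ≠ z ∧ x ∈ T j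
      · obtain ⟨j, hj, hxj⟩ := hxT
        exact Set.mem_iUnion.2 ⟨j, by rw [hCne j hj]; exact hxj⟩
      · refine Set.mem_iUnion.2 ⟨z, ?_⟩
        rw [hCz]
        refine ⟨hx, ?_⟩
        intro hmem
        obtain ⟨j, hj⟩ := Set.mem_iUnion.1 hmem
        obtain ⟨hjz, hxj⟩ := Set.mem_iUnion.1 hj
        exact hxT ⟨j, hjz, hxj⟩
  refine ⟨C, ⟨hCrat, hCdisj, hCcover⟩, ?_⟩
  intro i x hx
  by_contra hcon
  have hiff : ∀ j, x ∈ R j ↔ x ∈ B j := by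
    intro j
    have : x ∉ B j ∆ R j := fun h => hcon (Set.mem_iUnion.2 ⟨j, h⟩)
    rw [Set.mem_symmDiff] at this
    push_neg at this
    exact ⟨this.2, this.1⟩
  have hx01 : x ∈ Set.Ico (0:ℝ) 1 := by
    rw [Set.mem_symmDiff] at hx
    rcases hx with ⟨h, -⟩ | ⟨h, -⟩
    exacts [hBsub i h, hCsub i h]
  obtain ⟨jx, hjx⟩ : ∃ j, x ∈ B j := by
    rw [← hBcover] at hx01
    exact Set.mem_iUnion.1 hx01
  have hBuniq : ∀ j, x ∈ B j ↔ j = jx := by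
    intro j
    constructor
    · intro h
      by_contra hne
      exact (Set.disjoint_left.1 (hBdisj j jx hne)) h hjx
    · rintro rfl; exact hjx
  have hTuniq : ∀ j, x ∈ T j ↔ j = jx := by
    intro j
    constructor
    · intro h
      exact (hBuniq j).1 ((hiff j).1 (hTsub j h))
    · rintro rfl
      refine ⟨(hiff _).2 hjx, ?_⟩
      intro hmem
      obtain ⟨j', hj'⟩ := Set.mem_iUnion.1 hmem
      obtain ⟨hlt, hxj'⟩ := Set.mem_iUnion.1 hj'
      exact (ne_of_lt hlt) (((hBuniq j').1 ((hiff j').1 hxj')))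
  have hCuniq : ∀ j, x ∈ C j ↔ j = jx := by
    intro j
    by_cases hj : j = z
    · subst hj
      rw [hCz]
      by_cases hjz : jx = z
      · subst hjz
        simp only [Set.mem_diff, hx01, true_and, eq_self_iff_true, iff_true]
        intro hmem
        obtain ⟨j', hj'⟩ := Set.mem_iUnion.1 hmem
        obtain ⟨hne, hxj'⟩ := Set.mem_iUnion.1 hj'
        exact hne ((hTuniq j').1 hxj')
      · constructor
        · rintro ⟨-, habs⟩
          exact absurd (Set.mem_iUnion.2 ⟨jx, Set.mem_iUnion.2
            ⟨hjz, (hTuniq jx).2 rfl⟩⟩) habs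
        · intro h; exact absurd h.symm hjz
    · rw [hCne j hj, hTuniq j]
  rw [Set.mem_symmDiff] at hx
  rcases hx with ⟨hB, hC'⟩ | ⟨hC', hB⟩
  · exact hC' ((hCuniq i).2 ((hBuniq i).1 hB))
  · exact hB ((hBuniq i).2 ((hCuniq i).1 hC'))

/-- Theorem 5 of the paper: if the non-atomic Borel probability measures
`μ 0, …, μ (k-1)` on `[0,1)` admit a super-fair Borel partition, then any distribution
`D` on the (countable) set `𝒬` of rational-interval partitions whose support is all of
`𝒬` draws, with positive probability, a partition `(C 0, …, C (k-1))` with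
`μ i (C i) > 1/k` for every `i`. -/
theorem random_rational_partition_superfair_positive_probability
    (k : ℕ) (μ : Fin k → Measure ℝ) [∀ i, IsProbabilityMeasure (μ i)]
    (hsupp : ∀ i, μ i (Set.Ico (0 : ℝ) 1)ᶜ = 0)
    (hatom : ∀ i (x : ℝ), μ i {x} = 0)
    (B : Fin k → Set ℝ)
    (hmeas : ∀ j, MeasurableSet (B j))
    (hdisj : ∀ j j', j ≠ j' → Disjoint (B j) (B j'))
    (hcover : (⋃ j, B j) = Set.Ico (0 : ℝ) 1)
    (hfair : ∀ i, (k : ℝ≥0∞)⁻¹ < μ i (B i))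
    (D : PMF {Q : Fin k → Set ℝ // IsQPartition k Q})
    (hfull : ∀ q, 0 < D q) :
    0 < D.toOuterMeasure {q | ∀ i, (k : ℝ≥0∞)⁻¹ < μ i (q.1 i)} := by
  classical
  have hk : 0 < k := by
    by_contra h
    push_neg at h
    have hk0 : k = 0 := Nat.le_zero.1 h
    subst hk0
    have h0 : (0:ℝ) ∈ Set.Ico (0:ℝ) 1 := by constructor <;> norm_num
    rw [← hcover] at h0
    obtain ⟨j, -⟩ := Set.mem_iUnion.1 h0
    exact j.elim0
  have hne : (Finset.univ : Finset (Fin k)).Nonempty := ⟨⟨0, hk⟩, Finset.mem_univ _⟩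
  set ν : Measure ℝ := ∑ j : Fin k, μ j with hν
  haveI : IsFiniteMeasure ν := by
    constructor
    rw [hν, Measure.finset_sum_apply]
    have : ∀ j : Fin k, μ j Set.univ = 1 := fun j => measure_univ
    simp only [this, Finset.sum_const, Finset.card_univ, Fintype.card_fin, nsmul_eq_mul,
      mul_one]
    exact ENNReal.natCast_lt_top k
  have hν0 : ν (Set.Ico (0:ℝ) 1)ᶜ = 0 := by
    rw [hν, Measure.finset_sum_apply]
    exact Finset.sum_eq_zero fun i _ => hsupp i
  have hμle : ∀ (i : Fin k) (S : Set ℝ), μ i S ≤ ν S := by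
    intro i S
    rw [hν, Measure.finset_sum_apply]
    exact Finset.single_le_sum (f := fun j => μ j S) (fun _ _ => zero_le) (Finset.mem_univ i)
  have hBsub : ∀ j, B j ⊆ Set.Ico (0:ℝ) 1 := fun j => hcover ▸ Set.subset_iUnion B j
  set δ : ℝ≥0∞ := Finset.univ.inf' hne (fun i => μ i (B i) - (k : ℝ≥0∞)⁻¹) with hδ
  obtain ⟨i0, -, hi0⟩ := Finset.exists_mem_eq_inf' hne (fun i => μ i (B i) - (k : ℝ≥0∞)⁻¹)
  have hδpos : 0 < δ := by
    rw [hδ, hi0]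
    exact tsub_pos_iff_lt.2 (hfair i0)
  have hδtop : δ ≠ ⊤ := by
    rw [hδ, hi0]
    exact ne_top_of_le_ne_top (measure_ne_top _ _) tsub_le_self
  have hδadd : ∀ i, (k : ℝ≥0∞)⁻¹ + δ ≤ μ i (B i) := by
    intro i
    have h1 : δ ≤ μ i (B i) - (k : ℝ≥0∞)⁻¹ :=
      Finset.inf'_le _ (Finset.mem_univ i)
    calc (k : ℝ≥0∞)⁻¹ + δ ≤ (k : ℝ≥0∞)⁻¹ + (μ i (B i) - (k : ℝ≥0∞)⁻¹) :=
          add_le_add le_rfl h1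
      _ = μ i (B i) := add_tsub_cancel_of_le (hfair i).le
  have hkR : (0:ℝ) < k := by exact_mod_cast hk
  set ε : ℝ := δ.toReal / (2 * k) with hε
  have hεpos : 0 < ε := by
    apply div_pos (ENNReal.toReal_pos hδpos.ne' hδtop)
    positivity
  have hRex : ∀ j, ∃ R, IsRatIcoUnion R ∧ ν (B j ∆ R) < ENNReal.ofReal ε :=
    fun j => approx_lemma ν hν0 (hmeas j) (hBsub j) ε hεpos
  choose R hRrat hRlt using hRex
  have hsum : ∑ j : Fin k, ν (B j ∆ R j) < δ := by
    have h1 : ∑ j : Fin k, ν (B j ∆ R j) < ∑ _j : Fin k, ENNReal.ofReal ε :=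
      ENNReal.sum_lt_sum_of_nonempty hne (fun j _ => hRlt j)
    have h2 : ∑ _j : Fin k, ENNReal.ofReal ε = (k : ℝ≥0∞) * ENNReal.ofReal ε := by
      rw [Finset.sum_const, Finset.card_univ, Fintype.card_fin, nsmul_eq_mul]
    have h3 : (k : ℝ≥0∞) * ENNReal.ofReal ε = δ / 2 := by
      rw [← ENNReal.ofReal_natCast k, ← ENNReal.ofReal_mul hkR.le]
      have hmul : (k:ℝ) * ε = (δ / 2).toReal := by
        rw [ENNReal.toReal_div, hε]
        field_simp
        norm_num
      rw [hmul, ENNReal.ofReal_toReal]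
      exact (ENNReal.div_lt_top hδtop two_ne_zero).ne
    have h4 : δ / 2 < δ := ENNReal.half_lt_self hδpos.ne' hδtop
    calc ∑ j : Fin k, ν (B j ∆ R j) < ∑ _j : Fin k, ENNReal.ofReal ε := h1
      _ = δ / 2 := by rw [h2, h3]
      _ < δ := h4
  obtain ⟨C, hCpart, hCΔ⟩ := partition_construction hk B R hBsub hdisj hcover hRrat
  have hgood : ∀ i, (k : ℝ≥0∞)⁻¹ < μ i (C i) := by
    intro i
    have hμΔ : μ i (B i ∆ C i) < δ :=
      calc μ i (B i ∆ C i) ≤ ν (B i ∆ C i) := hμle _ _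
        _ ≤ ν (⋃ j, B j ∆ R j) := measure_mono (hCΔ i)
        _ ≤ ∑' j, ν (B j ∆ R j) := measure_iUnion_le _
        _ = ∑ j : Fin k, ν (B j ∆ R j) := tsum_fintype _
        _ < δ := hsum
    have hCmeas : MeasurableSet (C i) := RatU.measurableSet (hCpart.1 i)
    have h5 : μ i (B i) ≤ μ i (C i) + μ i (B i ∆ C i) := by
      calc μ i (B i) = μ i (B i ∩ C i) + μ i (B i \ C i) :=
            (measure_inter_add_diff _ hCmeas).symm
        _ ≤ μ i (C i) + μ i (B i ∆ C i) :=
            add_le_add (measure_mono Set.inter_subset_right)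
              (measure_mono (fun x hx => Set.mem_symmDiff.2 (Or.inl ⟨hx.1, hx.2⟩)))
    have h6 : (k : ℝ≥0∞)⁻¹ + δ < μ i (C i) + δ :=
      lt_of_le_of_lt (le_trans (hδadd i) h5)
        (ENNReal.add_lt_add_left (measure_ne_top _ _) hμΔ)
    exact (ENNReal.add_lt_add_iff_right hδtop).1 h6
  set q : {Q : Fin k → Set ℝ // IsQPartition k Q} := ⟨C, hCpart⟩ with hq
  have hqmem : q ∈ {q : {Q : Fin k → Set ℝ // IsQPartition k Q} |
      ∀ i, (k : ℝ≥0∞)⁻¹ < μ i (q.1 i)} := hgood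
  calc (0 : ℝ≥0∞) < D q := hfull q
    _ = D.toOuterMeasure {q} := (D.toOuterMeasure_apply_singleton q).symm
    _ ≤ D.toOuterMeasure {q' | ∀ i, (k : ℝ≥0∞)⁻¹ < μ i (q'.1 i)} :=
        D.toOuterMeasure.mono (Set.singleton_subset_iff.2 hqmem)
end

section
/- Let there be k players and a finite set C of n indivisible goods, where each player i has additive utility μ_i with μ_i({a}) ∈ {1,2,…,M} for every good a. Suppose player i declares truthfully (ν_i = μ_i) and the goods are allocated by Mechanism 3: goods are grouped into bins B_S = {a : ∀i, ν_i({a}) = s_i} indexed by S = (s_1,…,s_k) ∈ {1,…,M}^k, each bin of size |B_S| is split so that every player receives exactly ⌊|B_S|/k⌋ goods from it, and leftover goods are allocated arbitrarily. Then, with probability one, for every j the resulting allocation C_1,…,C_k satisfies μ_i(C_j) ≥ μ_i(C)/k − (M·k·M^k)/k = μ_i(C)/k − M^{k+1}. In particular, if M·k·M^k ≤ ε·μ_i(C) then μ_i(C_j) ≥ (1 − ε)·μ_i(C)/k, so a truthful player is deterministically guaranteed at least a (1 − ε) fraction of her expected share. -/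
/-- Deterministic guarantee of Mechanism 3 for a truthful player: goods are binned by
the vector of declared per-good values `S : Fin k → ℕ` (all values lie in `{1, …, M}`),
each player receives at least `⌊|B_S| / k⌋` goods from every bin `B_S`, and leftovers
are allocated arbitrarily. If player `i` declares truthfully (`ν i = μ`, her true
additive utility), then with probability one every share `C j` satisfies
`μ(C j) ≥ μ(C)/k − M^(k+1) = μ(C)/k − (M·k·M^k)/k`; in particular, whenever
`M·k·M^k ≤ ε·μ(C)` one gets `μ(C j) ≥ (1 − ε)·μ(C)/k`. -/
theorem mechanism_three_deterministic_guarantee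
    (k n M : ℕ) (hk : 0 < k)
    (ν : Fin k → Fin n → ℕ)
    (hval : ∀ (i' : Fin k) (a : Fin n), ν i' a ∈ Finset.Icc 1 M)
    (i : Fin k) (μ : Fin n → ℕ) (htruth : ν i = μ)
    (B : (Fin k → ℕ) → Finset (Fin n))
    (hB : ∀ S, B S = Finset.univ.filter (fun a => ∀ i', ν i' a = S i'))
    (C : Fin k → Finset (Fin n))
    (hdisj : ∀ j j', j ≠ j' → Disjoint (C j) (C j'))
    (hcover : ∀ a, ∃ j, a ∈ C j)
    (hfloor : ∀ (S : Fin k → ℕ) (j : Fin k), (B S).card / k ≤ (C j ∩ B S).card) :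
    (∀ j, ((∑ a, μ a : ℕ) : ℝ) / k - (M : ℝ) ^ (k + 1) ≤ ((∑ a ∈ C j, μ a : ℕ) : ℝ)) ∧
    (∀ ε : ℝ, (M : ℝ) * k * (M : ℝ) ^ k ≤ ε * ((∑ a, μ a : ℕ) : ℝ) →
      ∀ j, (1 - ε) * ((∑ a, μ a : ℕ) : ℝ) / k ≤ ((∑ a ∈ C j, μ a : ℕ) : ℝ)) := by
  subst htruth
  classical
  set P := Fintype.piFinset (fun _ : Fin k => Finset.Icc 1 M) with hP
  have hmem : ∀ a : Fin n, (fun i' => ν i' a) ∈ P := by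
    intro a
    rw [hP, Fintype.mem_piFinset]
    intro i'; exact hval i' a
  have hBfib : ∀ S, B S = Finset.univ.filter (fun a => (fun i' => ν i' a) = S) := by
    intro S
    rw [hB S]
    apply Finset.filter_congr
    intro a _
    simp [funext_iff]
  have hPcard : P.card = M ^ k := by
    rw [hP, Fintype.card_piFinset]
    simp [Nat.card_Icc]
  have htot : ∑ S ∈ P, S i * (B S).card = ∑ a, ν i a := by
    rw [← Finset.sum_fiberwise_of_maps_to (fun a _ => hmem a) (fun a => ν i a)]
    refine Finset.sum_congr rfl fun S hS => ?_
    rw [hBfib S]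
    have hc : ∀ a ∈ Finset.univ.filter (fun a => (fun i' => ν i' a) = S), ν i a = S i := by
      intro a ha
      exact congrFun (Finset.mem_filter.mp ha).2 i
    rw [Finset.sum_congr rfl hc, Finset.sum_const, smul_eq_mul, mul_comm]
  have hCj : ∀ j, ∑ S ∈ P, S i * (C j ∩ B S).card = ∑ a ∈ C j, ν i a := by
    intro j
    rw [← Finset.sum_fiberwise_of_maps_to (s := C j) (fun a _ => hmem a) (fun a => ν i a)]
    refine Finset.sum_congr rfl fun S hS => ?_
    have hinter : C j ∩ B S = (C j).filter (fun a => (fun i' => ν i' a) = S) := by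
      rw [hBfib S]; ext a; simp
    rw [hinter]
    have hc : ∀ a ∈ (C j).filter (fun a => (fun i' => ν i' a) = S), ν i a = S i := by
      intro a ha
      exact congrFun (Finset.mem_filter.mp ha).2 i
    rw [Finset.sum_congr rfl hc, Finset.sum_const, smul_eq_mul, mul_comm]
  have key : ∀ j, ∑ a, ν i a ≤ k * (∑ a ∈ C j, ν i a) + M * k * M ^ k := by
    intro j
    have h1 : ∑ S ∈ P, S i * (B S).card
        ≤ ∑ S ∈ P, (k * (S i * ((B S).card / k)) + M * k) := by
      refine Finset.sum_le_sum fun S hS => ?_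
      have hSi : S i ≤ M := (Finset.mem_Icc.mp ((Fintype.mem_piFinset.mp hS) i)).2
      have hc : (B S).card ≤ k * ((B S).card / k) + k := by
        conv_lhs => rw [← Nat.div_add_mod (B S).card k]
        exact Nat.add_le_add_left (le_of_lt (Nat.mod_lt _ hk)) _
      calc S i * (B S).card ≤ S i * (k * ((B S).card / k) + k) :=
            Nat.mul_le_mul_left _ hc
        _ = k * (S i * ((B S).card / k)) + S i * k := by ring
        _ ≤ k * (S i * ((B S).card / k)) + M * k :=
            Nat.add_le_add_left (Nat.mul_le_mul_right k hSi) _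
    have h2 : ∑ S ∈ P, (k * (S i * ((B S).card / k)) + M * k)
        = k * (∑ S ∈ P, S i * ((B S).card / k)) + M * k * M ^ k := by
      rw [Finset.sum_add_distrib, ← Finset.mul_sum, Finset.sum_const, hPcard, smul_eq_mul]
      ring
    have h3 : ∑ S ∈ P, S i * ((B S).card / k) ≤ ∑ S ∈ P, S i * (C j ∩ B S).card :=
      Finset.sum_le_sum fun S _ => Nat.mul_le_mul_left _ (hfloor S j)
    calc ∑ a, ν i a = ∑ S ∈ P, S i * (B S).card := htot.symm
      _ ≤ k * (∑ S ∈ P, S i * ((B S).card / k)) + M * k * M ^ k := by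
          rw [← h2]; exact h1
      _ ≤ k * (∑ S ∈ P, S i * (C j ∩ B S).card) + M * k * M ^ k := by
          exact Nat.add_le_add_right (Nat.mul_le_mul_left k h3) _
      _ = k * (∑ a ∈ C j, ν i a) + M * k * M ^ k := by rw [hCj j]
  have hkR : (0:ℝ) < k := by exact_mod_cast hk
  have keyR : ∀ j, ((∑ a, ν i a : ℕ) : ℝ)
      ≤ k * ((∑ a ∈ C j, ν i a : ℕ) : ℝ) + M * k * (M:ℝ) ^ k := by
    intro j
    exact_mod_cast key j
  constructor
  · intro j
    rw [sub_le_iff_le_add, div_le_iff₀ hkR]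
    have hp : (M:ℝ) ^ (k+1) = (M:ℝ) ^ k * M := pow_succ _ _
    nlinarith [keyR j]
  · intro ε hε j
    rw [div_le_iff₀ hkR]
    nlinarith [keyR j]
end
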